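/- Let g be real with 0 < g < 1/12 and set R = (1 − √(1 − 12g))/(6g). There is a unique real χ with 0 < χ < 1 satisfying χ + 1/χ = (1 − 4gR)/(gR), and for this χ the sequence defined for integers n ≥ −1 by Rₙ = R·(1 − χ^(n+1))·(1 − χ^(n+4)) / ((1 − χ^(n+2))·(1 − χ^(n+3))) satisfies: (i) R₋₁ = 0; (ii) Rₙ = 1 + g·Rₙ·(R_(n−1) + Rₙ + R_(n+1)) for every n ≥ 0; and (iii) Rₙ → R as n → ∞. -/

import Mathlib

set_option maxHeartbeats 2000000

theorem stmt_7 (g : ℝ) (hg0 : 0 < g) (hg1 : g < 1/12) :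
    let R : ℝ := (1 - Real.sqrt (1 - 12*g))/(6*g)
    (∃! χ : ℝ, 0 < χ ∧ χ < 1 ∧ χ + 1/χ = (1 - 4*g*R)/(g*R)) ∧
    ∀ χ : ℝ, 0 < χ → χ < 1 → χ + 1/χ = (1 - 4*g*R)/(g*R) →
      let Rseq : ℤ → ℝ := fun n =>
        R * (1 - χ^(n+1)) * (1 - χ^(n+4)) / ((1 - χ^(n+2)) * (1 - χ^(n+3)))
      Rseq (-1) = 0 ∧
      (∀ n : ℤ, 0 ≤ n →
        Rseq n = 1 + g * Rseq n * (Rseq (n-1) + Rseq n + Rseq (n+1))) ∧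
      Filter.Tendsto (fun n : ℕ => Rseq n) Filter.atTop (nhds R) := by
  intro R
  have h12 : (0:ℝ) < 1 - 12*g := by linarith
  have hRdef : R = (1 - Real.sqrt (1 - 12*g))/(6*g) := rfl
  clear_value R
  obtain ⟨s, hsdef⟩ : ∃ s : ℝ, s = Real.sqrt (1 - 12*g) := ⟨_, rfl⟩
  rw [← hsdef] at hRdef
  have hs0 : 0 < s := hsdef ▸ Real.sqrt_pos.mpr h12
  have hs2 : s^2 = 1 - 12*g := hsdef ▸ Real.sq_sqrt h12.le
  have hs1 : s < 1 := by nlinarith [hs2, hs0]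
  have hg : g ≠ 0 := ne_of_gt hg0
  have hgR : g * R = (1-s)/6 := by rw [hRdef]; field_simp
  have hgR0 : 0 < g*R := by rw [hgR]; linarith
  have hgRne : g*R ≠ 0 := ne_of_gt hgR0
  have hR0 : 0 < R := by nlinarith [hgR0]
  have hR2 : 3*g*R^2 - R + 1 = 0 := by
    have key : 12*g*(3*g*R^2 - R + 1) = 0 := by
      have h : 12*g*(3*g*R^2 - R + 1) = 36*(g*R)^2 - 12*(g*R) + 12*g := by ring
      rw [h, hgR]; linear_combination hs2
    have h12g : (12:ℝ)*g ≠ 0 := by positivity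
    exact (mul_eq_zero.mp key).resolve_left h12g
  have h1s : (1:ℝ) - s ≠ 0 := by linarith
  have hS : (1 - 4*g*R)/(g*R) = (2+4*s)/(1-s) := by
    rw [show (1:ℝ)-4*g*R = 1 - 4*((1-s)/6) by rw [← hgR]; ring, hgR,
      div_eq_div_iff (by linarith) (by linarith)]; ring
  obtain ⟨S, hSdef⟩ : ∃ S : ℝ, S = (2+4*s)/(1-s) := ⟨_, rfl⟩
  rw [← hSdef] at hS
  have hS2 : 2 < S := by
    rw [hSdef, lt_div_iff₀ (by linarith)]; linarith
  have hSsq : 0 ≤ S^2 - 4 := by nlinarith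
  obtain ⟨d, hddef⟩ : ∃ d : ℝ, d = Real.sqrt (S^2 - 4) := ⟨_, rfl⟩
  have hd0 : 0 ≤ d := hddef ▸ Real.sqrt_nonneg _
  have hd2 : d^2 = S^2 - 4 := hddef ▸ Real.sq_sqrt hSsq
  have hdS : d < S := by nlinarith [hd2, hd0]
  constructor
  · refine ⟨(S - d)/2, ⟨by linarith, ?_, ?_⟩, ?_⟩
    · -- (S-d)/2 < 1
      have h1 : (S-2)^2 < d^2 := by rw [hd2]; nlinarith
      have h2 : S - 2 < d := lt_of_pow_lt_pow_left₀ 2 hd0 h1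
      linarith
    · rw [hS]
      have hne : (S - d)/2 ≠ 0 := ne_of_gt (by linarith)
      have hq : ((S-d)/2)^2 + 1 = S*((S-d)/2) := by linear_combination hd2/4
      have hinv : 1/((S-d)/2) = S - (S-d)/2 := by
        rw [eq_comm, eq_div_iff hne]; linear_combination -hd2/4
      rw [hinv]; ring
    · rintro y ⟨hy0, hy1, hyeq⟩
      rw [hS] at hyeq
      have hyne : y ≠ 0 := ne_of_gt hy0
      have hy2 : y^2 + 1 = S*y := by
        field_simp at hyeq; linear_combination hyeq
      have hx0 : 0 < (S-d)/2 := by linarith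
      have hx1 : (S-d)/2 < 1 := by
        have h1 : (S-2)^2 < d^2 := by rw [hd2]; nlinarith
        have h2 : S - 2 < d := lt_of_pow_lt_pow_left₀ 2 hd0 h1
        linarith
      have hx2 : ((S-d)/2)^2 + 1 = S*((S-d)/2) := by linear_combination hd2/4
      have hz : (y - (S-d)/2) * (y + (S-d)/2 - S) = 0 := by
        linear_combination hy2 - hx2
      rcases mul_eq_zero.mp hz with h | h
      · linarith
      · linarith
  · intro χ hχ0 hχ1 hχeq Rseq
    have hRseq : ∀ k : ℤ, Rseq k = R * (1 - χ^(k+1)) * (1 - χ^(k+4)) /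
        ((1 - χ^(k+2)) * (1 - χ^(k+3))) := fun k => rfl
    have hχne : χ ≠ 0 := ne_of_gt hχ0
    have h1 : g*R*(1+4*χ+χ^2) = χ := by
      field_simp [hχne, hgRne] at hχeq
      linear_combination hχeq
    have hQ : (0:ℝ) < 1+χ+χ^2 := by positivity
    have hQ4 : (0:ℝ) < 1+4*χ+χ^2 := by positivity
    have hRχ : R*(1+χ+χ^2) = 1+4*χ+χ^2 := by
      linear_combination (-(1+4*χ+χ^2))*hR2 + 3*R*h1
    have hRe : R = (1+4*χ+χ^2)/(1+χ+χ^2) := by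
      rw [eq_div_iff (ne_of_gt hQ)]; exact hRχ
    have hge : g = χ*(1+χ+χ^2)/(1+4*χ+χ^2)^2 := by
      rw [eq_div_iff (ne_of_gt (by positivity))]
      linear_combination (1+χ+χ^2)*h1 - g*(1+4*χ+χ^2)*hRχ
    have hpn : ∀ k:ℕ, k ≠ 0 → (1:ℝ)-χ^k ≠ 0 := by
      intro k hk
      have := pow_lt_one₀ hχ0.le hχ1 hk
      exact ne_of_gt (by linarith)
    have hval : ∀ m:ℕ, Rseq ((m:ℤ)-1) = R*(1-χ^m)*(1-χ^(m+3))/((1-χ^(m+1))*(1-χ^(m+2))) := by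
      intro m
      rw [hRseq]
      rw [show (m:ℤ)-1+1 = ((m:ℕ):ℤ) from by ring,
          show (m:ℤ)-1+4 = ((m+3:ℕ):ℤ) from by push_cast; ring,
          show (m:ℤ)-1+2 = ((m+1:ℕ):ℤ) from by push_cast; ring,
          show (m:ℤ)-1+3 = ((m+2:ℕ):ℤ) from by push_cast; ring]
      simp only [zpow_natCast]
    have hval' : ∀ m:ℕ, Rseq (m:ℤ) = R*(1-χ^(m+1))*(1-χ^(m+4))/((1-χ^(m+2))*(1-χ^(m+3))) := by
      intro m
      rw [hRseq]
      rw [show (m:ℤ)+1 = ((m+1:ℕ):ℤ) from by push_cast; ring,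
          show (m:ℤ)+4 = ((m+4:ℕ):ℤ) from by push_cast; ring,
          show (m:ℤ)+2 = ((m+2:ℕ):ℤ) from by push_cast; ring,
          show (m:ℤ)+3 = ((m+3:ℕ):ℤ) from by push_cast; ring]
      simp only [zpow_natCast]
    refine ⟨?_, ?_, ?_⟩
    · rw [hRseq]; norm_num
    · intro n hn
      obtain ⟨m, rfl⟩ := Int.eq_ofNat_of_zero_le hn
      have E1 : Rseq ((m:ℤ)+1) = Rseq (((m+1:ℕ):ℤ)) := by norm_num
      rw [E1, hval m, hval' m, hval' (m+1)]
      have d1 : (1:ℝ)-χ^(m+1) ≠ 0 := hpn (m+1) (by omega)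
      have d2 : (1:ℝ)-χ^(m+2) ≠ 0 := hpn (m+2) (by omega)
      have d3 : (1:ℝ)-χ^(m+3) ≠ 0 := hpn (m+3) (by omega)
      have d4 : (1:ℝ)-χ^(m+1+2) ≠ 0 := hpn (m+1+2) (by omega)
      have d5 : (1:ℝ)-χ^(m+1+3) ≠ 0 := hpn (m+1+3) (by omega)
      rw [hRe, hge]
      simp only [pow_add, pow_one] at d1 d2 d3 d4 d5 ⊢
      generalize χ^m = x at d1 d2 d3 d4 d5 ⊢
      rw [show x*χ*χ^2 = x*χ^3 by ring, show x*χ*χ^3 = x*χ^4 by ring] at *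
      rw [show x*χ*χ = x*χ^2 by ring, show x*χ*χ^4 = x*χ^5 by ring]
      rw [mul_comm] at d1 d2 d3 d4 d5
      field_simp
      ring
    · have hlim0 : Filter.Tendsto (fun n:ℕ => χ^n) Filter.atTop (nhds 0) :=
        tendsto_pow_atTop_nhds_zero_of_lt_one hχ0.le hχ1
      have hlimk : ∀ k:ℕ, Filter.Tendsto (fun n:ℕ => χ^(n+k)) Filter.atTop (nhds 0) :=
        fun k => hlim0.comp (Filter.tendsto_add_atTop_nat k)
      have hmain : Filter.Tendsto
          (fun n:ℕ => R*(1-χ^(n+1))*(1-χ^(n+4))/((1-χ^(n+2))*(1-χ^(n+3))))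
          Filter.atTop (nhds (R*(1-0)*(1-0)/((1-0)*(1-0)))) :=
        Filter.Tendsto.div
          ((tendsto_const_nhds.mul (tendsto_const_nhds.sub (hlimk 1))).mul
            (tendsto_const_nhds.sub (hlimk 4)))
          ((tendsto_const_nhds.sub (hlimk 2)).mul (tendsto_const_nhds.sub (hlimk 3)))
          (by norm_num)
      have hv : R*(1-(0:ℝ))*(1-0)/((1-0)*(1-0)) = R := by norm_num
      rw [hv] at hmain
      exact hmain.congr (fun n => (hval' n).symm)
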